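/- Let Q be a finite type, I, F ⊆ Q, and S : Q × Q → Set(ℤ^n) a function assigning to each pair of states a semilinear subset of ℤ^n. Then the set of all values x ∈ ℤ^n such that there exist k ≥ 0, a sequence of states q_0, q_1, …, q_k with q_0 ∈ I and q_k ∈ F, and elements x_i ∈ S(q_{i−1}, q_i) for 1 ≤ i ≤ k with x = x_1 + ⋯ + x_k (the empty sum 0 being allowed when I ∩ F is nonempty), is a semilinear subset of ℤ^n. -/

import Mathlib

/-- A set `S ⊆ ℤ^n` is linear if it is the translate by some `b` of the
additive submonoid generated by a finite set `P`. -/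
def IsLinearSetZ {n : ℕ} (S : Set (Fin n → ℤ)) : Prop :=
  ∃ (b : Fin n → ℤ) (P : Finset (Fin n → ℤ)),
    S = {x | ∃ p ∈ AddSubmonoid.closure (P : Set (Fin n → ℤ)), x = b + p}

/-- A set is semilinear if it is a finite union of linear sets. -/
def IsSemilinearSetZ {n : ℕ} (S : Set (Fin n → ℤ)) : Prop :=
  ∃ (k : ℕ) (T : Fin k → Set (Fin n → ℤ)),
    (∀ i, IsLinearSetZ (T i)) ∧ S = ⋃ i, T i

namespace SLAux
open Pointwise

variable {n : ℕ}

theorem linear_semilinear {S : Set (Fin n → ℤ)} (h : IsLinearSetZ S) :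
    IsSemilinearSetZ S :=
  ⟨1, fun _ => S, fun _ => h, (Set.iUnion_const S).symm⟩

theorem semilinear_empty : IsSemilinearSetZ (∅ : Set (Fin n → ℤ)) :=
  ⟨0, fun i => i.elim0, fun i => i.elim0, by simp⟩

theorem linear_zero : IsLinearSetZ ({0} : Set (Fin n → ℤ)) := by
  refine ⟨0, ∅, ?_⟩
  ext x
  simp [AddSubmonoid.closure_empty, AddSubmonoid.mem_bot]

theorem semilinear_zero : IsSemilinearSetZ ({0} : Set (Fin n → ℤ)) :=
  linear_semilinear linear_zero

theorem semilinear_union {A B : Set (Fin n → ℤ)} (hA : IsSemilinearSetZ A)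
    (hB : IsSemilinearSetZ B) : IsSemilinearSetZ (A ∪ B) := by
  obtain ⟨k1, T1, h1, rfl⟩ := hA
  obtain ⟨k2, T2, h2, rfl⟩ := hB
  refine ⟨k1 + k2, Fin.append T1 T2, fun i => ?_, ?_⟩
  · cases i using Fin.addCases with
    | left j => rw [Fin.append_left]; exact h1 j
    | right j => rw [Fin.append_right]; exact h2 j
  · ext x
    simp only [Set.mem_union, Set.mem_iUnion]
    constructor
    · rintro (⟨j, hj⟩ | ⟨j, hj⟩)
      · exact ⟨Fin.castAdd k2 j, by rwa [Fin.append_left]⟩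
      · exact ⟨Fin.natAdd k1 j, by rwa [Fin.append_right]⟩
    · rintro ⟨i, hi⟩
      cases i using Fin.addCases with
      | left j => rw [Fin.append_left] at hi; exact Or.inl ⟨j, hi⟩
      | right j => rw [Fin.append_right] at hi; exact Or.inr ⟨j, hi⟩

theorem semilinear_iUnion_fin {k : ℕ} (T : Fin k → Set (Fin n → ℤ))
    (h : ∀ i, IsSemilinearSetZ (T i)) : IsSemilinearSetZ (⋃ i, T i) := by
  induction k with
  | zero => simpa using semilinear_empty
  | succ m ih =>
    have : (⋃ i, T i) = T 0 ∪ ⋃ i : Fin m, T i.succ := by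
      ext x; simp [Fin.exists_fin_succ]
    rw [this]
    exact semilinear_union (h 0) (ih _ fun i => h i.succ)

theorem semilinear_iUnion {ι : Type} [Fintype ι] (T : ι → Set (Fin n → ℤ))
    (h : ∀ i, IsSemilinearSetZ (T i)) : IsSemilinearSetZ (⋃ i, T i) := by
  classical
  obtain ⟨e⟩ := Fintype.truncEquivFin ι
  have : (⋃ i, T i) = ⋃ j, T (e.symm j) := by
    ext x
    simp only [Set.mem_iUnion]
    exact ⟨fun ⟨i, hi⟩ => ⟨e i, by simpa using hi⟩, fun ⟨j, hj⟩ => ⟨e.symm j, hj⟩⟩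
  rw [this]
  exact semilinear_iUnion_fin _ fun j => h _

theorem linear_add {A B : Set (Fin n → ℤ)} (hA : IsLinearSetZ A) (hB : IsLinearSetZ B) :
    IsLinearSetZ (A + B) := by
  obtain ⟨b1, P1, rfl⟩ := hA
  obtain ⟨b2, P2, rfl⟩ := hB
  refine ⟨b1 + b2, P1 ∪ P2, ?_⟩
  ext x
  simp only [Set.mem_add, Set.mem_setOf_eq, Finset.coe_union, AddSubmonoid.closure_union]
  constructor
  · rintro ⟨y, ⟨p, hp, rfl⟩, z, ⟨q, hq, rfl⟩, rfl⟩
    refine ⟨p + q, ?_, by abel⟩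
    exact add_mem (AddSubmonoid.mem_sup_left hp) (AddSubmonoid.mem_sup_right hq)
  · rintro ⟨p, hp, rfl⟩
    obtain ⟨y, hy, z, hz, rfl⟩ := AddSubmonoid.mem_sup.mp hp
    exact ⟨b1 + y, ⟨y, hy, rfl⟩, b2 + z, ⟨z, hz, rfl⟩, by abel⟩

theorem semilinear_add {A B : Set (Fin n → ℤ)} (hA : IsSemilinearSetZ A)
    (hB : IsSemilinearSetZ B) : IsSemilinearSetZ (A + B) := by
  obtain ⟨k1, T1, h1, rfl⟩ := hA
  obtain ⟨k2, T2, h2, rfl⟩ := hB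
  have : (⋃ i, T1 i) + (⋃ j, T2 j) = ⋃ ij : Fin k1 × Fin k2, (T1 ij.1 + T2 ij.2) := by
    ext x
    simp only [Set.mem_add, Set.mem_iUnion, Prod.exists]
    constructor
    · rintro ⟨y, ⟨i, hy⟩, z, ⟨j, hz⟩, rfl⟩
      exact ⟨i, j, Set.add_mem_add hy hz⟩
    · rintro ⟨i, j, hx⟩
      obtain ⟨y, hy, z, hz, rfl⟩ := Set.mem_add.mp hx
      exact ⟨y, ⟨i, hy⟩, z, ⟨j, hz⟩, rfl⟩
  rw [this]
  exact semilinear_iUnion _ fun ij => linear_semilinear (linear_add (h1 ij.1) (h2 ij.2))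

theorem star_linear {A : Set (Fin n → ℤ)} (hA : IsLinearSetZ A) :
    IsSemilinearSetZ (AddSubmonoid.closure A : Set (Fin n → ℤ)) := by
  obtain ⟨b, P, rfl⟩ := hA
  have helper1 : ∀ m ∈ AddSubmonoid.closure (({b} ∪ ↑P : Set (Fin n → ℤ))),
      ∃ (k : ℕ) (c : Fin n → ℤ), c ∈ AddSubmonoid.closure (P : Set (Fin n → ℤ)) ∧
        m = k • b + c := by
    intro m hm
    induction hm using AddSubmonoid.closure_induction with
    | mem y hy =>
      rcases hy with hy | hy
      · exact ⟨1, 0, AddSubmonoid.zero_mem _, by simp [Set.mem_singleton_iff.mp hy]⟩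
      · exact ⟨0, y, AddSubmonoid.subset_closure hy, by simp⟩
    | zero => exact ⟨0, 0, AddSubmonoid.zero_mem _, by simp⟩
    | add x y hx hy ihx ihy =>
      obtain ⟨k1, c1, hc1, rfl⟩ := ihx
      obtain ⟨k2, c2, hc2, rfl⟩ := ihy
      exact ⟨k1 + k2, c1 + c2, add_mem hc1 hc2, by rw [add_nsmul]; abel⟩
  have helper2 : ∀ (k : ℕ) (c : Fin n → ℤ), c ∈ AddSubmonoid.closure (P : Set (Fin n → ℤ)) →
      (k + 1) • b + c ∈ AddSubmonoid.closure {x | ∃ p ∈ AddSubmonoid.closure (P : Set (Fin n → ℤ)), x = b + p} := by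
    intro k
    induction k with
    | zero =>
      intro c hc
      exact AddSubmonoid.subset_closure ⟨c, hc, by rw [one_nsmul]⟩
    | succ j ih =>
      intro c hc
      have hb : b ∈ AddSubmonoid.closure {x | ∃ p ∈ AddSubmonoid.closure (P : Set (Fin n → ℤ)), x = b + p} :=
        AddSubmonoid.subset_closure ⟨0, AddSubmonoid.zero_mem _, (add_zero b).symm⟩
      have := add_mem hb (ih c hc)
      have heq : b + ((j + 1) • b + c) = (j + 1 + 1) • b + c := by
        conv_rhs => rw [succ_nsmul]
        abel
      rwa [heq] at this
  have key : (AddSubmonoid.closure {x | ∃ p ∈ AddSubmonoid.closure (P : Set (Fin n → ℤ)), x = b + p} : Set (Fin n → ℤ)) =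
      {0} ∪ {x | ∃ m ∈ AddSubmonoid.closure (({b} ∪ ↑P : Set (Fin n → ℤ))), x = b + m} := by
    ext x
    simp only [Set.mem_union, Set.mem_singleton_iff, Set.mem_setOf_eq, SetLike.mem_coe]
    constructor
    · intro hx
      induction hx using AddSubmonoid.closure_induction with
      | mem y hy =>
        obtain ⟨p, hp, rfl⟩ := hy
        exact Or.inr ⟨p, AddSubmonoid.closure_mono Set.subset_union_right hp, rfl⟩
      | zero => exact Or.inl rfl
      | add x y hx hy ihx ihy =>
        have hbmem : b ∈ AddSubmonoid.closure (({b} ∪ ↑P : Set (Fin n → ℤ))) :=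
          AddSubmonoid.subset_closure (Or.inl rfl)
        rcases ihx with rfl | ⟨m1, hm1, rfl⟩ <;> rcases ihy with rfl | ⟨m2, hm2, rfl⟩
        · exact Or.inl (add_zero 0)
        · exact Or.inr ⟨m2, hm2, (zero_add _)⟩
        · exact Or.inr ⟨m1, hm1, (add_zero _)⟩
        · exact Or.inr ⟨m1 + b + m2, add_mem (add_mem hm1 hbmem) hm2, by abel⟩
    · rintro (rfl | ⟨m, hm, rfl⟩)
      · exact AddSubmonoid.zero_mem _
      · obtain ⟨k, c, hc, rfl⟩ := helper1 m hm
        have := helper2 k c hc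
        have heq : (k + 1) • b + c = b + (k • b + c) := by
          conv_lhs => rw [succ_nsmul]
          abel
        rwa [heq] at this
  rw [key]
  refine semilinear_union semilinear_zero (linear_semilinear ⟨b, insert b P, ?_⟩)
  rw [Finset.coe_insert, Set.insert_eq]

theorem star_semilinear {A : Set (Fin n → ℤ)} (hA : IsSemilinearSetZ A) :
    IsSemilinearSetZ (AddSubmonoid.closure A : Set (Fin n → ℤ)) := by
  obtain ⟨k, T, hT, rfl⟩ := hA
  induction k with
  | zero =>
    rw [Set.iUnion_of_empty, AddSubmonoid.closure_empty, AddSubmonoid.coe_bot]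
    exact semilinear_zero
  | succ m ih =>
    have h1 : (⋃ i, T i) = T 0 ∪ ⋃ i : Fin m, T i.succ := by
      ext x; simp [Fin.exists_fin_succ]
    rw [h1, AddSubmonoid.closure_union]
    have h2 : ((AddSubmonoid.closure (T 0) ⊔ AddSubmonoid.closure (⋃ i : Fin m, T i.succ) : AddSubmonoid (Fin n → ℤ)) : Set (Fin n → ℤ))
        = (AddSubmonoid.closure (T 0) : Set (Fin n → ℤ)) + (AddSubmonoid.closure (⋃ i : Fin m, T i.succ) : Set (Fin n → ℤ)) := by
      ext x
      simp only [SetLike.mem_coe, AddSubmonoid.mem_sup, Set.mem_add]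
    rw [h2]
    exact semilinear_add (star_linear (hT 0)) (ih _ fun i => hT i.succ)

variable {Q : Type}

/-- Sums along nonempty paths from `p` to `q` whose intermediate states lie in `T`. -/
inductive PathSum (S : Q → Q → Set (Fin n → ℤ)) (T : Set Q) : Q → Q → (Fin n → ℤ) → Prop
  | single {p q : Q} {x : Fin n → ℤ} : x ∈ S p q → PathSum S T p q x
  | cons {p r q : Q} {x y : Fin n → ℤ} : x ∈ S p r → r ∈ T → PathSum S T r q y →
      PathSum S T p q (x + y)

theorem PathSum.mono {S : Q → Q → Set (Fin n → ℤ)} {T T' : Set Q} {p q : Q} {x : Fin n → ℤ}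
    (h : PathSum S T p q x) (hTT : T ⊆ T') : PathSum S T' p q x := by
  induction h with
  | single h => exact PathSum.single h
  | cons h hr _ ih => exact PathSum.cons h (hTT hr) ih

theorem PathSum.trans {S : Q → Q → Set (Fin n → ℤ)} {T : Set Q} {p r q : Q}
    {x y : Fin n → ℤ} (hr : r ∈ T) (h1 : PathSum S T p r x) (h2 : PathSum S T r q y) :
    PathSum S T p q (x + y) := by
  induction h1 with
  | single h => exact PathSum.cons h hr h2
  | cons h hr' _ ih => rw [add_assoc]; exact PathSum.cons h hr' (ih hr h2)

theorem pathSum_empty {S : Q → Q → Set (Fin n → ℤ)} {p q : Q} {x : Fin n → ℤ} :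
    PathSum S ∅ p q x ↔ x ∈ S p q := by
  constructor
  · intro h
    cases h with
    | single h => exact h
    | cons h hr _ => exact absurd hr (Set.notMem_empty _)
  · exact PathSum.single

theorem pathSum_decomp {S : Q → Q → Set (Fin n → ℤ)} {T : Set Q} {r p q : Q}
    {x : Fin n → ℤ} (h : PathSum S (insert r T) p q x) :
    PathSum S T p q x ∨
      ∃ a c d : Fin n → ℤ, PathSum S T p r a ∧
        c ∈ AddSubmonoid.closure {y | PathSum S T r r y} ∧ PathSum S T r q d ∧
        x = a + c + d := by
  induction h with
  | single h => exact Or.inl (PathSum.single h)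
  | @cons p s q x y h hs _ ih =>
    rcases hs with rfl | hs
    · rcases ih with ih | ⟨a, c, d, ha, hc, hd, rfl⟩
      · exact Or.inr ⟨x, 0, y, PathSum.single h, AddSubmonoid.zero_mem _, ih, by abel⟩
      · exact Or.inr ⟨x, a + c, d, PathSum.single h,
          add_mem (AddSubmonoid.subset_closure ha) hc, hd, by abel⟩
    · rcases ih with ih | ⟨a, c, d, ha, hc, hd, rfl⟩
      · exact Or.inl (PathSum.cons h hs ih)
      · exact Or.inr ⟨x + a, c, d, PathSum.cons h hs ha, hc, hd, by abel⟩

theorem pathSum_compose {S : Q → Q → Set (Fin n → ℤ)} {T : Set Q} {r p q : Q}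
    {a c d : Fin n → ℤ} (ha : PathSum S T p r a)
    (hc : c ∈ AddSubmonoid.closure {y | PathSum S T r r y}) (hd : PathSum S T r q d) :
    PathSum S (insert r T) p q (a + c + d) := by
  have hrmem : r ∈ (insert r T : Set Q) := Set.mem_insert r T
  have hsub : T ⊆ insert r T := Set.subset_insert r T
  have hcr : c = 0 ∨ PathSum S (insert r T) r r c := by
    induction hc using AddSubmonoid.closure_induction with
    | mem y hy => exact Or.inr ((hy : PathSum S T r r y).mono hsub)
    | zero => exact Or.inl rfl
    | add u v hu hv ihu ihv =>
      rcases ihu with rfl | ihu <;> rcases ihv with rfl | ihv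
      · exact Or.inl (add_zero 0)
      · rw [zero_add]; exact Or.inr ihv
      · rw [add_zero]; exact Or.inr ihu
      · exact Or.inr (PathSum.trans hrmem ihu ihv)
  rcases hcr with rfl | hcr
  · rw [add_zero]
    exact PathSum.trans hrmem (ha.mono hsub) (hd.mono hsub)
  · rw [add_assoc]
    exact PathSum.trans hrmem (ha.mono hsub) (PathSum.trans hrmem hcr (hd.mono hsub))

theorem pathSum_semilinear {S : Q → Q → Set (Fin n → ℤ)}
    (hS : ∀ p q, IsSemilinearSetZ (S p q)) (T : Finset Q) :
    ∀ p q : Q, IsSemilinearSetZ {x | PathSum S (↑T) p q x} := by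
  classical
  induction T using Finset.induction_on with
  | empty =>
    intro p q
    have : {x | PathSum S (↑(∅ : Finset Q)) p q x} = S p q := by
      ext x
      simp only [Finset.coe_empty, Set.mem_setOf_eq]
      exact pathSum_empty
    rw [this]; exact hS p q
  | @insert r T hrT ih =>
    intro p q
    have key : {x | PathSum S (↑(insert r T)) p q x} =
        {x | PathSum S (↑T) p q x} ∪
          ({x | PathSum S (↑T) p r x} +
            (AddSubmonoid.closure {y | PathSum S (↑T) r r y} : Set (Fin n → ℤ)) +
            {x | PathSum S (↑T) r q x}) := by
      ext x
      simp only [Finset.coe_insert, Set.mem_setOf_eq, Set.mem_union]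
      constructor
      · intro hx
        rcases pathSum_decomp hx with h | ⟨a, c, d, ha, hc, hd, rfl⟩
        · exact Or.inl h
        · exact Or.inr (Set.add_mem_add (Set.add_mem_add ha hc) hd)
      · rintro (h | h)
        · exact h.mono (Set.subset_insert r ↑T)
        · obtain ⟨u, hu, d, hd, rfl⟩ := Set.mem_add.mp h
          obtain ⟨a, ha, c, hc, rfl⟩ := Set.mem_add.mp hu
          exact pathSum_compose ha hc hd
    rw [key]
    exact semilinear_union (ih p q)
      (semilinear_add (semilinear_add (ih p r) (star_semilinear (ih r r))) (ih r q))

theorem pathSum_of_finpath {S : Q → Q → Set (Fin n → ℤ)} :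
    ∀ (k : ℕ) (q : Fin (k + 1 + 1) → Q) (xs : Fin (k + 1) → (Fin n → ℤ)),
      (∀ i : Fin (k + 1), xs i ∈ S (q i.castSucc) (q i.succ)) →
      PathSum S Set.univ (q 0) (q (Fin.last (k + 1))) (∑ i, xs i) := by
  intro k
  induction k with
  | zero =>
    intro q xs h
    rw [Fin.sum_univ_one]
    have h0 := h 0
    have e1 : (0 : Fin 1).castSucc = (0 : Fin 2) := rfl
    have e2 : (0 : Fin 1).succ = Fin.last 1 := rfl
    rw [e1, e2] at h0
    exact PathSum.single h0
  | succ m ih =>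
    intro q xs h
    rw [Fin.sum_univ_succ]
    have h0 := h 0
    have tail := ih (fun i => q i.succ) (fun i => xs i.succ) (fun i => by
      have := h i.succ
      rwa [← Fin.succ_castSucc] at this)
    have e1 : (0 : Fin (m + 1 + 1)).castSucc = (0 : Fin (m + 1 + 1 + 1)) := rfl
    rw [e1] at h0
    exact PathSum.cons h0 (Set.mem_univ _) tail

theorem finpath_of_pathSum {S : Q → Q → Set (Fin n → ℤ)} {T : Set Q} {p q : Q}
    {x : Fin n → ℤ} (h : PathSum S T p q x) :
    ∃ (k : ℕ) (qf : Fin (k + 1) → Q) (xs : Fin k → (Fin n → ℤ)),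
      qf 0 = p ∧ qf (Fin.last k) = q ∧
      (∀ i : Fin k, xs i ∈ S (qf i.castSucc) (qf i.succ)) ∧ x = ∑ i, xs i := by
  induction h with
  | @single p q x h =>
    refine ⟨1, ![p, q], ![x], rfl, rfl, ?_, by simp⟩
    intro i
    fin_cases i
    simpa using h
  | @cons p r q x y h hr _ ih =>
    obtain ⟨k, qf, xs, h0, hlast, hedges, rfl⟩ := ih
    refine ⟨k + 1, Fin.cases p qf, Fin.cases x xs, by simp, ?_, ?_, ?_⟩
    · rw [← Fin.succ_last]
      simp only [Fin.cases_succ]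
      exact hlast
    · intro i
      induction i using Fin.cases with
      | zero =>
        simp only [Fin.castSucc_zero, Fin.cases_zero, Fin.cases_succ, h0]
        exact h
      | succ j =>
        rw [← Fin.succ_castSucc]
        simp only [Fin.cases_succ]
        exact hedges j
    · rw [Fin.sum_univ_succ]
      simp only [Fin.cases_zero, Fin.cases_succ]

theorem semilinear_iUnion_prop (p : Prop) {A : Set (Fin n → ℤ)} (h : IsSemilinearSetZ A) :
    IsSemilinearSetZ (⋃ _ : p, A) := by
  classical
  rw [Set.iUnion_eq_if]
  by_cases hp : p
  · rwa [if_pos hp]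
  · rw [if_neg hp]; exact semilinear_empty

end SLAux

/-- Values obtained by summing, along a path of states from `I` to `F`,
elements of the semilinear sets attached to consecutive pairs of states,
form a semilinear set. -/
theorem isSemilinearSet_path_sums
    {n : ℕ} {Q : Type} [Fintype Q] (I F : Set Q)
    (S : Q → Q → Set (Fin n → ℤ))
    (hS : ∀ p q, IsSemilinearSetZ (S p q)) :
    IsSemilinearSetZ
      {x | ∃ (k : ℕ) (q : Fin (k + 1) → Q) (xs : Fin k → (Fin n → ℤ)),
            q 0 ∈ I ∧ q (Fin.last k) ∈ F ∧
            (∀ i : Fin k, xs i ∈ S (q i.castSucc) (q i.succ)) ∧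
            x = ∑ i, xs i} := by
  classical
  have key : {x | ∃ (k : ℕ) (q : Fin (k + 1) → Q) (xs : Fin k → (Fin n → ℤ)),
            q 0 ∈ I ∧ q (Fin.last k) ∈ F ∧
            (∀ i : Fin k, xs i ∈ S (q i.castSucc) (q i.succ)) ∧
            x = ∑ i, xs i} =
      (⋃ _ : (I ∩ F).Nonempty, ({0} : Set (Fin n → ℤ))) ∪
        ⋃ pq : Q × Q, ⋃ _ : pq.1 ∈ I ∧ pq.2 ∈ F,
          {x | SLAux.PathSum S Set.univ pq.1 pq.2 x} := by
    ext x
    simp only [Set.mem_setOf_eq, Set.mem_union, Set.mem_iUnion, Set.mem_singleton_iff,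
      Prod.exists]
    constructor
    · rintro ⟨k, q, xs, hI, hF, hedges, rfl⟩
      cases k with
      | zero => exact Or.inl ⟨⟨q 0, hI, hF⟩, by simp⟩
      | succ m =>
        exact Or.inr ⟨q 0, q (Fin.last (m + 1)), ⟨hI, hF⟩,
          SLAux.pathSum_of_finpath m q xs hedges⟩
    · rintro (⟨⟨q0, hq0⟩, rfl⟩ | ⟨p, q, ⟨hpI, hqF⟩, hx⟩)
      · exact ⟨0, fun _ => q0, fun i => i.elim0, hq0.1, hq0.2, fun i => i.elim0, by simp⟩
      · obtain ⟨k, qf, xs, h0, hlast, hedges, rfl⟩ := SLAux.finpath_of_pathSum hx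
        exact ⟨k, qf, xs, h0 ▸ hpI, hlast ▸ hqF, hedges, rfl⟩
  rw [key]
  refine SLAux.semilinear_union (SLAux.semilinear_iUnion_prop _ SLAux.semilinear_zero)
    (SLAux.semilinear_iUnion _ fun pq => SLAux.semilinear_iUnion_prop _ ?_)
  have := SLAux.pathSum_semilinear hS (Finset.univ : Finset Q) pq.1 pq.2
  rwa [Finset.coe_univ] at this
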